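/- If noisy |CCZ⟩ states are produced from four |T⟩ states each having independent Z-error probability p (via Jones's circuit, in which each of the four T errors propagates to a distinct single- or multi-qubit Z error on the output), then the 10-to-1 protocol output error is p_out = 4p² + 21p³ + O(p⁴). -/

import Mathlib

/-!
The 10-to-1 protocol with the `[[10,1,2]]` code, where the noisy `|CCZ⟩` input
is produced by Jones's circuit from four `|T⟩` states with independent Z-error
probability `p` each.  The four possible T errors propagate to the four distinct
Z errors `Z₁`, `Z₂`, `Z₃`, `Z₁Z₂Z₃` on the three output qubits.
-/

abbrev V3 := {v : Fin 3 → ZMod 2 // v ≠ 0}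

noncomputable def pT (p : ℝ) (e : V3 → Bool) : ℝ :=
  ∏ v : V3, if e v then p else 1 - p

/-- Probability of the error pattern `f` on the four `|T⟩` states used in
Jones's circuit. -/
noncomputable def pJones (p : ℝ) (f : Fin 4 → Bool) : ℝ :=
  ∏ j : Fin 4, if f j then p else 1 - p

/-- The distinct Z errors on the output `|CCZ⟩` state to which the four T errors
of Jones's circuit propagate: `Z₁`, `Z₂`, `Z₃` and `Z₁Z₂Z₃`. -/
def jonesErr : Fin 4 → Fin 3 → ZMod 2 :=
  ![![1, 0, 0], ![0, 1, 0], ![0, 0, 1], ![1, 1, 1]]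

/-- The Z error on the `|CCZ⟩` state induced by the T-error pattern `f`. -/
def bOf (f : Fin 4 → Bool) : Fin 3 → ZMod 2 :=
  ∑ j : Fin 4, if f j then jonesErr j else 0

def syndromeTrivial (e : V3 → Bool) (b : Fin 3 → ZMod 2) : Prop :=
  ∀ i : Fin 3, (∑ v : V3, if v.1 i = 1 ∧ e v then (1 : ZMod 2) else 0) = b i

instance (e : V3 → Bool) (b : Fin 3 → ZMod 2) : Decidable (syndromeTrivial e b) := by
  unfold syndromeTrivial; infer_instance

def logicalZErr (e : V3 → Bool) : Prop :=
  (∑ v : V3, if e v then (1 : ZMod 2) else 0) = 1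

instance (e : V3 → Bool) : Decidable (logicalZErr e) := by
  unfold logicalZErr; infer_instance

noncomputable def pSuccJ (p : ℝ) : ℝ :=
  ∑ e : V3 → Bool, ∑ f : Fin 4 → Bool,
    if syndromeTrivial e (bOf f) then pT p e * pJones p f else 0

noncomputable def pFailJ (p : ℝ) : ℝ :=
  ∑ e : V3 → Bool, ∑ f : Fin 4 → Bool,
    if syndromeTrivial e (bOf f) ∧ logicalZErr e then pT p e * pJones p f else 0

noncomputable def pOutJ (p : ℝ) : ℝ := pFailJ p / pSuccJ p

-- ### Auxiliary machinery

def idxV (v : V3) : Fin 7 :=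
  ⟨(v.1 0).val + 2 * (v.1 1).val + 4 * (v.1 2).val - 1, by
    have h0 := ZMod.val_lt (v.1 0); have h1 := ZMod.val_lt (v.1 1)
    have h2 := ZMod.val_lt (v.1 2); omega⟩

def phiV (g : Fin 7 → Bool) : V3 → Bool := fun v => g (idxV v)

lemma hidxV : Function.Bijective idxV := by decide

lemma hphiV : Function.Bijective phiV := by
  rw [Fintype.bijective_iff_injective_and_card]
  constructor
  · intro g g' h
    funext i
    obtain ⟨v, rfl⟩ := hidxV.surjective i
    exact congrFun h v
  · have h7 : Fintype.card V3 = 7 := by decide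
    simp [Fintype.card_fun, h7]

lemma sum_V3 (G : (V3 → Bool) → ℝ) : ∑ e, G e = ∑ g : Fin 7 → Bool, G (phiV g) :=
  (Fintype.sum_bijective phiV hphiV _ G (fun _ => rfl)).symm

lemma pT_phi (p : ℝ) (g : Fin 7 → Bool) :
    pT p (phiV g) = ∏ i : Fin 7, if g i then p else 1 - p :=
  Fintype.prod_bijective idxV hidxV _ _ (fun _ => rfl)

lemma sum_succ {n : ℕ} (F : (Fin (n + 1) → Bool) → ℝ) :
    ∑ g : Fin (n + 1) → Bool, F g
      = (∑ g : Fin n → Bool, F (Fin.cons false g))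
        + ∑ g : Fin n → Bool, F (Fin.cons true g) := by
  rw [← Fintype.sum_equiv (Fin.consEquiv fun _ => Bool) _ F (fun x => rfl),
    Fintype.sum_prod_type, Fintype.sum_bool]
  exact add_comm _ _

lemma sum_base (F : (Fin 0 → Bool) → ℝ) : ∑ g, F g = F (fun i => i.elim0) :=
  Fintype.sum_subsingleton _ _

noncomputable def SS (p : ℝ) (b : Fin 3 → ZMod 2) : ℝ :=
  ∑ e : V3 → Bool, if syndromeTrivial e b then pT p e else 0

noncomputable def SZ (p : ℝ) (b : Fin 3 → ZMod 2) : ℝ :=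
  ∑ e : V3 → Bool, if syndromeTrivial e b ∧ logicalZErr e then pT p e else 0

set_option maxHeartbeats 1000000 in
lemma SSval000 (p : ℝ) : SS p ![0, 0, 0] = 1 - 7*p + 21*p^2 - 28*p^3 + 14*p^4 := by
  rw [SS, sum_V3]
  simp only [sum_succ, sum_base, pT_phi, Fin.prod_univ_succ, Fin.prod_univ_zero,
    Fin.cons_zero, Fin.cons_succ]
  simp (config := { decide := true }) only [if_true, if_false]
  ring

set_option maxHeartbeats 1000000 in
lemma SZval000 (p : ℝ) : SZ p ![0, 0, 0] = 7*p^3 - 28*p^4 + 42*p^5 - 28*p^6 + 8*p^7 := by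
  rw [SZ, sum_V3]
  simp only [sum_succ, sum_base, pT_phi, Fin.prod_univ_succ, Fin.prod_univ_zero,
    Fin.cons_zero, Fin.cons_succ]
  simp (config := { decide := true }) only [if_true, if_false]
  ring

set_option maxHeartbeats 1000000 in
lemma SSval001 (p : ℝ) : SS p ![0, 0, 1] = p - 3*p^2 + 4*p^3 - 2*p^4 := by
  rw [SS, sum_V3]
  simp only [sum_succ, sum_base, pT_phi, Fin.prod_univ_succ, Fin.prod_univ_zero,
    Fin.cons_zero, Fin.cons_succ]
  simp (config := { decide := true }) only [if_true, if_false]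
  ring

set_option maxHeartbeats 1000000 in
lemma SZval001 (p : ℝ) : SZ p ![0, 0, 1] = p - 6*p^2 + 19*p^3 - 36*p^4 + 42*p^5 - 28*p^6 + 8*p^7 := by
  rw [SZ, sum_V3]
  simp only [sum_succ, sum_base, pT_phi, Fin.prod_univ_succ, Fin.prod_univ_zero,
    Fin.cons_zero, Fin.cons_succ]
  simp (config := { decide := true }) only [if_true, if_false]
  ring

set_option maxHeartbeats 1000000 in
lemma SSval010 (p : ℝ) : SS p ![0, 1, 0] = p - 3*p^2 + 4*p^3 - 2*p^4 := by
  rw [SS, sum_V3]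
  simp only [sum_succ, sum_base, pT_phi, Fin.prod_univ_succ, Fin.prod_univ_zero,
    Fin.cons_zero, Fin.cons_succ]
  simp (config := { decide := true }) only [if_true, if_false]
  ring

set_option maxHeartbeats 1000000 in
lemma SZval010 (p : ℝ) : SZ p ![0, 1, 0] = p - 6*p^2 + 19*p^3 - 36*p^4 + 42*p^5 - 28*p^6 + 8*p^7 := by
  rw [SZ, sum_V3]
  simp only [sum_succ, sum_base, pT_phi, Fin.prod_univ_succ, Fin.prod_univ_zero,
    Fin.cons_zero, Fin.cons_succ]
  simp (config := { decide := true }) only [if_true, if_false]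
  ring

set_option maxHeartbeats 1000000 in
lemma SSval011 (p : ℝ) : SS p ![0, 1, 1] = p - 3*p^2 + 4*p^3 - 2*p^4 := by
  rw [SS, sum_V3]
  simp only [sum_succ, sum_base, pT_phi, Fin.prod_univ_succ, Fin.prod_univ_zero,
    Fin.cons_zero, Fin.cons_succ]
  simp (config := { decide := true }) only [if_true, if_false]
  ring

set_option maxHeartbeats 1000000 in
lemma SZval011 (p : ℝ) : SZ p ![0, 1, 1] = p - 6*p^2 + 19*p^3 - 36*p^4 + 42*p^5 - 28*p^6 + 8*p^7 := by
  rw [SZ, sum_V3]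
  simp only [sum_succ, sum_base, pT_phi, Fin.prod_univ_succ, Fin.prod_univ_zero,
    Fin.cons_zero, Fin.cons_succ]
  simp (config := { decide := true }) only [if_true, if_false]
  ring

set_option maxHeartbeats 1000000 in
lemma SSval100 (p : ℝ) : SS p ![1, 0, 0] = p - 3*p^2 + 4*p^3 - 2*p^4 := by
  rw [SS, sum_V3]
  simp only [sum_succ, sum_base, pT_phi, Fin.prod_univ_succ, Fin.prod_univ_zero,
    Fin.cons_zero, Fin.cons_succ]
  simp (config := { decide := true }) only [if_true, if_false]
  ring

set_option maxHeartbeats 1000000 in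
lemma SZval100 (p : ℝ) : SZ p ![1, 0, 0] = p - 6*p^2 + 19*p^3 - 36*p^4 + 42*p^5 - 28*p^6 + 8*p^7 := by
  rw [SZ, sum_V3]
  simp only [sum_succ, sum_base, pT_phi, Fin.prod_univ_succ, Fin.prod_univ_zero,
    Fin.cons_zero, Fin.cons_succ]
  simp (config := { decide := true }) only [if_true, if_false]
  ring

set_option maxHeartbeats 1000000 in
lemma SSval101 (p : ℝ) : SS p ![1, 0, 1] = p - 3*p^2 + 4*p^3 - 2*p^4 := by
  rw [SS, sum_V3]
  simp only [sum_succ, sum_base, pT_phi, Fin.prod_univ_succ, Fin.prod_univ_zero,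
    Fin.cons_zero, Fin.cons_succ]
  simp (config := { decide := true }) only [if_true, if_false]
  ring

set_option maxHeartbeats 1000000 in
lemma SZval101 (p : ℝ) : SZ p ![1, 0, 1] = p - 6*p^2 + 19*p^3 - 36*p^4 + 42*p^5 - 28*p^6 + 8*p^7 := by
  rw [SZ, sum_V3]
  simp only [sum_succ, sum_base, pT_phi, Fin.prod_univ_succ, Fin.prod_univ_zero,
    Fin.cons_zero, Fin.cons_succ]
  simp (config := { decide := true }) only [if_true, if_false]
  ring

set_option maxHeartbeats 1000000 in
lemma SSval110 (p : ℝ) : SS p ![1, 1, 0] = p - 3*p^2 + 4*p^3 - 2*p^4 := by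
  rw [SS, sum_V3]
  simp only [sum_succ, sum_base, pT_phi, Fin.prod_univ_succ, Fin.prod_univ_zero,
    Fin.cons_zero, Fin.cons_succ]
  simp (config := { decide := true }) only [if_true, if_false]
  ring

set_option maxHeartbeats 1000000 in
lemma SZval110 (p : ℝ) : SZ p ![1, 1, 0] = p - 6*p^2 + 19*p^3 - 36*p^4 + 42*p^5 - 28*p^6 + 8*p^7 := by
  rw [SZ, sum_V3]
  simp only [sum_succ, sum_base, pT_phi, Fin.prod_univ_succ, Fin.prod_univ_zero,
    Fin.cons_zero, Fin.cons_succ]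
  simp (config := { decide := true }) only [if_true, if_false]
  ring

set_option maxHeartbeats 1000000 in
lemma SSval111 (p : ℝ) : SS p ![1, 1, 1] = p - 3*p^2 + 4*p^3 - 2*p^4 := by
  rw [SS, sum_V3]
  simp only [sum_succ, sum_base, pT_phi, Fin.prod_univ_succ, Fin.prod_univ_zero,
    Fin.cons_zero, Fin.cons_succ]
  simp (config := { decide := true }) only [if_true, if_false]
  ring

set_option maxHeartbeats 1000000 in
lemma SZval111 (p : ℝ) : SZ p ![1, 1, 1] = p - 6*p^2 + 19*p^3 - 36*p^4 + 42*p^5 - 28*p^6 + 8*p^7 := by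
  rw [SZ, sum_V3]
  simp only [sum_succ, sum_base, pT_phi, Fin.prod_univ_succ, Fin.prod_univ_zero,
    Fin.cons_zero, Fin.cons_succ]
  simp (config := { decide := true }) only [if_true, if_false]
  ring

lemma succ_rw (p : ℝ) : pSuccJ p = ∑ f : Fin 4 → Bool, pJones p f * SS p (bOf f) := by
  rw [pSuccJ, Finset.sum_comm]
  refine Finset.sum_congr rfl fun f _ => ?_
  rw [SS, Finset.mul_sum]
  refine Finset.sum_congr rfl fun e _ => ?_
  rw [mul_ite, mul_zero, mul_comm]

lemma fail_rw (p : ℝ) : pFailJ p = ∑ f : Fin 4 → Bool, pJones p f * SZ p (bOf f) := by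
  rw [pFailJ, Finset.sum_comm]
  refine Finset.sum_congr rfl fun f _ => ?_
  rw [SZ, Finset.mul_sum]
  refine Finset.sum_congr rfl fun e _ => ?_
  rw [mul_ite, mul_zero, mul_comm]

set_option maxHeartbeats 1000000 in
lemma succ_val (p : ℝ) : pSuccJ p = 1 - 11*p + 59*p^2 - 176*p^3 + 320*p^4 - 368*p^5 + 272*p^6 - 128*p^7 + 32*p^8 := by
  rw [succ_rw]
  simp only [sum_succ, sum_base]
  have hb0 : bOf (Fin.cons false (Fin.cons false (Fin.cons false (Fin.cons false (fun i => i.elim0))))) = ![0, 0, 0] := by decide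
  have hb1 : bOf (Fin.cons false (Fin.cons false (Fin.cons false (Fin.cons true (fun i => i.elim0))))) = ![1, 1, 1] := by decide
  have hb2 : bOf (Fin.cons false (Fin.cons false (Fin.cons true (Fin.cons false (fun i => i.elim0))))) = ![0, 0, 1] := by decide
  have hb3 : bOf (Fin.cons false (Fin.cons false (Fin.cons true (Fin.cons true (fun i => i.elim0))))) = ![1, 1, 0] := by decide
  have hb4 : bOf (Fin.cons false (Fin.cons true (Fin.cons false (Fin.cons false (fun i => i.elim0))))) = ![0, 1, 0] := by decide
  have hb5 : bOf (Fin.cons false (Fin.cons true (Fin.cons false (Fin.cons true (fun i => i.elim0))))) = ![1, 0, 1] := by decide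
  have hb6 : bOf (Fin.cons false (Fin.cons true (Fin.cons true (Fin.cons false (fun i => i.elim0))))) = ![0, 1, 1] := by decide
  have hb7 : bOf (Fin.cons false (Fin.cons true (Fin.cons true (Fin.cons true (fun i => i.elim0))))) = ![1, 0, 0] := by decide
  have hb8 : bOf (Fin.cons true (Fin.cons false (Fin.cons false (Fin.cons false (fun i => i.elim0))))) = ![1, 0, 0] := by decide
  have hb9 : bOf (Fin.cons true (Fin.cons false (Fin.cons false (Fin.cons true (fun i => i.elim0))))) = ![0, 1, 1] := by decide
  have hb10 : bOf (Fin.cons true (Fin.cons false (Fin.cons true (Fin.cons false (fun i => i.elim0))))) = ![1, 0, 1] := by decide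
  have hb11 : bOf (Fin.cons true (Fin.cons false (Fin.cons true (Fin.cons true (fun i => i.elim0))))) = ![0, 1, 0] := by decide
  have hb12 : bOf (Fin.cons true (Fin.cons true (Fin.cons false (Fin.cons false (fun i => i.elim0))))) = ![1, 1, 0] := by decide
  have hb13 : bOf (Fin.cons true (Fin.cons true (Fin.cons false (Fin.cons true (fun i => i.elim0))))) = ![0, 0, 1] := by decide
  have hb14 : bOf (Fin.cons true (Fin.cons true (Fin.cons true (Fin.cons false (fun i => i.elim0))))) = ![1, 1, 1] := by decide
  have hb15 : bOf (Fin.cons true (Fin.cons true (Fin.cons true (Fin.cons true (fun i => i.elim0))))) = ![0, 0, 0] := by decide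
  simp only [hb0, hb1, hb2, hb3, hb4, hb5, hb6, hb7, hb8, hb9, hb10, hb11, hb12, hb13, hb14, hb15, SSval000, SSval001, SSval010, SSval011, SSval100, SSval101, SSval110, SSval111]
  simp only [pJones, Fin.prod_univ_succ, Fin.prod_univ_zero, Fin.cons_zero, Fin.cons_succ]
  norm_num
  ring

set_option maxHeartbeats 1000000 in
lemma fail_val (p : ℝ) : pFailJ p = 4*p^2 - 23*p^3 + 60*p^4 - 88*p^5 + 80*p^6 - 48*p^7 + 16*p^8 := by
  rw [fail_rw]
  simp only [sum_succ, sum_base]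
  have hb0 : bOf (Fin.cons false (Fin.cons false (Fin.cons false (Fin.cons false (fun i => i.elim0))))) = ![0, 0, 0] := by decide
  have hb1 : bOf (Fin.cons false (Fin.cons false (Fin.cons false (Fin.cons true (fun i => i.elim0))))) = ![1, 1, 1] := by decide
  have hb2 : bOf (Fin.cons false (Fin.cons false (Fin.cons true (Fin.cons false (fun i => i.elim0))))) = ![0, 0, 1] := by decide
  have hb3 : bOf (Fin.cons false (Fin.cons false (Fin.cons true (Fin.cons true (fun i => i.elim0))))) = ![1, 1, 0] := by decide
  have hb4 : bOf (Fin.cons false (Fin.cons true (Fin.cons false (Fin.cons false (fun i => i.elim0))))) = ![0, 1, 0] := by decide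
  have hb5 : bOf (Fin.cons false (Fin.cons true (Fin.cons false (Fin.cons true (fun i => i.elim0))))) = ![1, 0, 1] := by decide
  have hb6 : bOf (Fin.cons false (Fin.cons true (Fin.cons true (Fin.cons false (fun i => i.elim0))))) = ![0, 1, 1] := by decide
  have hb7 : bOf (Fin.cons false (Fin.cons true (Fin.cons true (Fin.cons true (fun i => i.elim0))))) = ![1, 0, 0] := by decide
  have hb8 : bOf (Fin.cons true (Fin.cons false (Fin.cons false (Fin.cons false (fun i => i.elim0))))) = ![1, 0, 0] := by decide
  have hb9 : bOf (Fin.cons true (Fin.cons false (Fin.cons false (Fin.cons true (fun i => i.elim0))))) = ![0, 1, 1] := by decide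
  have hb10 : bOf (Fin.cons true (Fin.cons false (Fin.cons true (Fin.cons false (fun i => i.elim0))))) = ![1, 0, 1] := by decide
  have hb11 : bOf (Fin.cons true (Fin.cons false (Fin.cons true (Fin.cons true (fun i => i.elim0))))) = ![0, 1, 0] := by decide
  have hb12 : bOf (Fin.cons true (Fin.cons true (Fin.cons false (Fin.cons false (fun i => i.elim0))))) = ![1, 1, 0] := by decide
  have hb13 : bOf (Fin.cons true (Fin.cons true (Fin.cons false (Fin.cons true (fun i => i.elim0))))) = ![0, 0, 1] := by decide
  have hb14 : bOf (Fin.cons true (Fin.cons true (Fin.cons true (Fin.cons false (fun i => i.elim0))))) = ![1, 1, 1] := by decide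
  have hb15 : bOf (Fin.cons true (Fin.cons true (Fin.cons true (Fin.cons true (fun i => i.elim0))))) = ![0, 0, 0] := by decide
  simp only [hb0, hb1, hb2, hb3, hb4, hb5, hb6, hb7, hb8, hb9, hb10, hb11, hb12, hb13, hb14, hb15, SZval000, SZval001, SZval010, SZval011, SZval100, SZval101, SZval110, SZval111]
  simp only [pJones, Fin.prod_univ_succ, Fin.prod_univ_zero, Fin.cons_zero, Fin.cons_succ]
  norm_num
  ring

lemma succ_ge (p : ℝ) (h0 : 0 ≤ p) (h1 : p ≤ 1) : (1 - p) ^ 11 ≤ pSuccJ p := by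
  have hterm : ∀ (e : V3 → Bool) (f : Fin 4 → Bool),
      0 ≤ (if syndromeTrivial e (bOf f) then pT p e * pJones p f else 0) := by
    intro e f
    split
    · refine mul_nonneg (Finset.prod_nonneg fun v _ => ?_) (Finset.prod_nonneg fun j _ => ?_) <;>
        split <;> linarith
    · exact le_refl 0
  have hbase : (1 - p) ^ 11
      = (if syndromeTrivial (fun _ => false) (bOf fun _ => false)
          then pT p (fun _ => false) * pJones p (fun _ => false) else 0) := by
    rw [if_pos (by decide), pT, pJones]
    have c7 : (Finset.univ : Finset V3).card = 7 := by decide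
    simp only [if_neg (by simp : ¬ (false = true))]
    rw [Finset.prod_const, Finset.prod_const, c7, Finset.card_univ, Fintype.card_fin]
    ring
  rw [pSuccJ, hbase]
  calc (if syndromeTrivial (fun _ => false) (bOf fun _ => false)
          then pT p (fun _ => false) * pJones p (fun _ => false) else 0)
      ≤ ∑ f : Fin 4 → Bool, if syndromeTrivial (fun _ => false) (bOf f)
          then pT p (fun _ => false) * pJones p f else 0 :=
        Finset.single_le_sum (fun f _ => hterm _ f) (Finset.mem_univ _)
    _ ≤ ∑ e : V3 → Bool, ∑ f : Fin 4 → Bool,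
          if syndromeTrivial e (bOf f) then pT p e * pJones p f else 0 :=
        Finset.single_le_sum
          (fun e _ => Finset.sum_nonneg fun f _ => hterm e f) (Finset.mem_univ _)

/-- If the noisy `|CCZ⟩` states are produced from four `|T⟩`
states of independent Z-error probability `p` via Jones's circuit (each of the
four T errors propagating to a distinct Z error on the output), then the
10-to-1 protocol output error satisfies `p_out = 4p² + 21p³ + O(p⁴)`. -/
theorem ten_to_one_output_error_jones :
    ∃ C : ℝ, 0 < C ∧ ∀ p : ℝ, 0 ≤ p → p ≤ 1 / 2 →
      |pOutJ p - (4 * p ^ 2 + 21 * p ^ 3)| ≤ C * p ^ 4 := by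
  refine ⟨24147968, by norm_num, fun p h0 h2 => ?_⟩
  have h1 : p ≤ 1 := by linarith
  have hAlb : (1 : ℝ) / 2048 ≤ pSuccJ p := by
    have : ((1 : ℝ) / 2) ^ 11 ≤ (1 - p) ^ 11 :=
      pow_le_pow_left₀ (by norm_num) (by linarith) 11
    calc (1 : ℝ) / 2048 ≤ ((1 : ℝ) / 2) ^ 11 := by norm_num
      _ ≤ (1 - p) ^ 11 := this
      _ ≤ pSuccJ p := succ_ge p h0 h1
  have hApos : 0 < pSuccJ p := by linarith
  have key : pFailJ p - (4 * p ^ 2 + 21 * p ^ 3) * pSuccJ p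
      = p ^ 4 * (55 - 623*p + 2496*p^2 - 5296*p^3 + 6656*p^4 - 5200*p^5 + 2560*p^6 - 672*p^7) := by
    rw [succ_val, fail_val]; ring
  set R : ℝ := 55 - 623*p + 2496*p^2 - 5296*p^3 + 6656*p^4 - 5200*p^5 + 2560*p^6 - 672*p^7 with hR
  have hpk : ∀ k : ℕ, 0 ≤ p ^ k := fun k => pow_nonneg h0 k
  have hpk1 : ∀ k : ℕ, p ^ k ≤ 1 := fun k => pow_le_one₀ h0 h1
  have hRabs : |R| ≤ 11791 := by
    rw [abs_le]
    constructor
    · have := hpk1 1; have := hpk1 3; have := hpk1 5; have := hpk1 7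
      have := hpk 2; have := hpk 4; have := hpk 6
      nlinarith [hpk 1, hpk 3, hpk 5, hpk 7]
    · have := hpk1 2; have := hpk1 4; have := hpk1 6
      have := hpk 1; have := hpk 3; have := hpk 5; have := hpk 7
      nlinarith [hpk 2, hpk 4, hpk 6, hpk 0]
  have hdiff : pOutJ p - (4 * p ^ 2 + 21 * p ^ 3)
      = (pFailJ p - (4 * p ^ 2 + 21 * p ^ 3) * pSuccJ p) / pSuccJ p := by
    rw [pOutJ]
    field_simp
  rw [hdiff, key, abs_div, abs_of_pos hApos, div_le_iff₀ hApos]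
  have h4 : 0 ≤ p ^ 4 := hpk 4
  have habs : |p ^ 4 * R| ≤ p ^ 4 * 11791 := by
    rw [abs_mul, abs_of_nonneg h4]
    exact mul_le_mul_of_nonneg_left hRabs h4
  calc |p ^ 4 * R| ≤ p ^ 4 * 11791 := habs
    _ = (24147968 * p ^ 4) * (1 / 2048) := by ring
    _ ≤ (24147968 * p ^ 4) * pSuccJ p := by
        refine mul_le_mul_of_nonneg_left hAlb ?_
        positivity
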